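/- Let q be a prime and n ∈ ℤ. Let (p_i) be a sequence of primes, (ω_i) a sequence in (0,∞), and for each i let s_i ∈ ℚ_{p_i} (an element of the p_i-adic field). Then the following are equivalent: (1) for every polynomial P ∈ ℤ[X], the sequence ‖P(s_i)‖_{p_i}^{ω_i} converges to 0 if q divides P(n), and to 1 otherwise; (2) ω_i → ∞ and there exists i_0 ∈ ℕ such that for every i ≥ i_0 one has p_i = q and ‖s_i − n‖_q < 1 (i.e. s_i ∈ n + q·ℤ_q, where ℤ_q = {s ∈ ℚ_q : ‖s‖_q ≤ 1}). -/

import Mathlib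

open Polynomial Filter

private theorem key_diff (q : ℕ) [Fact q.Prime] (n : ℤ) (s : ℚ_[q])
    (hs : ‖s - (n:ℚ_[q])‖ < 1) (P : Polynomial ℤ) :
    ‖(Polynomial.aeval s P : ℚ_[q]) - ((P.eval n : ℤ) : ℚ_[q])‖ ≤ ‖s - (n:ℚ_[q])‖ := by
  have hs1 : ‖s‖ ≤ 1 := by
    have h := Padic.nonarchimedean (s - (n:ℚ_[q])) (n:ℚ_[q])
    simp only [sub_add_cancel] at h
    exact h.trans (max_le hs.le (Padic.norm_int_le_one n))
  set S : ℤ_[q] := ⟨s, hs1⟩ with hS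
  obtain ⟨c, hc⟩ := Polynomial.sub_dvd_eval_sub S ((n:ℤ_[q])) (P.map (Int.castRingHom ℤ_[q]))
  have h1 : (Polynomial.aeval S P : ℤ_[q]) = (P.map (Int.castRingHom ℤ_[q])).eval S := by
    rw [Polynomial.aeval_def, Polynomial.eval₂_eq_eval_map]; rfl
  have h2 : (Polynomial.aeval (n:ℤ_[q]) P : ℤ_[q]) = (P.map (Int.castRingHom ℤ_[q])).eval (n:ℤ_[q]) := by
    rw [Polynomial.aeval_def, Polynomial.eval₂_eq_eval_map]; rfl
  have h3 : ((P.eval n : ℤ) : ℤ_[q]) = Polynomial.aeval (n:ℤ_[q]) P := by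
    have := Polynomial.aeval_algebraMap_apply_eq_algebraMap_eval (A := ℤ_[q]) n P
    simpa using this.symm
  have key : ‖(Polynomial.aeval S P : ℤ_[q]) - ((P.eval n : ℤ) : ℤ_[q])‖ ≤ ‖S - (n:ℤ_[q])‖ := by
    rw [h1, h3, h2, hc, norm_mul]
    exact mul_le_of_le_one_right (norm_nonneg _) c.2
  have coe1 : ((Polynomial.aeval S P : ℤ_[q]) : ℚ_[q]) = Polynomial.aeval s P :=
    (Polynomial.aeval_algHom_apply (PadicInt.Coe.ringHom.toIntAlgHom) S P).symm
  calc ‖(Polynomial.aeval s P : ℚ_[q]) - ((P.eval n : ℤ) : ℚ_[q])‖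
      = ‖(((Polynomial.aeval S P : ℤ_[q]) - ((P.eval n : ℤ) : ℤ_[q])) : ℚ_[q])‖ := by
        push_cast [coe1]; ring_nf
    _ ≤ ‖S - (n:ℤ_[q])‖ := key
    _ = ‖s - (n:ℚ_[q])‖ := by rw [PadicInt.norm_def]; push_cast; rfl

private theorem norm_lt_one_le_inv (q : ℕ) [hq : Fact q.Prime] {x : ℚ_[q]} (h : ‖x‖ < 1) :
    ‖x‖ ≤ (q : ℝ)⁻¹ := by
  have := (Padic.norm_le_pow_iff_norm_lt_pow_add_one x (-1)).2 (by simpa using h)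
  simpa [zpow_neg_one] using this

private theorem norm_aeval_le (q : ℕ) [hq : Fact q.Prime] (n : ℤ) (s : ℚ_[q])
    (hs : ‖s - (n:ℚ_[q])‖ < 1) (P : Polynomial ℤ) (hdvd : (q:ℤ) ∣ P.eval n) :
    ‖(Polynomial.aeval s P : ℚ_[q])‖ ≤ (q : ℝ)⁻¹ := by
  have h1 : ‖(Polynomial.aeval s P : ℚ_[q]) - ((P.eval n : ℤ) : ℚ_[q])‖ ≤ (q:ℝ)⁻¹ :=
    le_trans (key_diff q n s hs P) (norm_lt_one_le_inv q hs)
  have h2 : ‖((P.eval n : ℤ) : ℚ_[q])‖ ≤ (q:ℝ)⁻¹ :=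
    norm_lt_one_le_inv q (Padic.norm_intCast_lt_one_iff.2 hdvd)
  calc ‖(Polynomial.aeval s P : ℚ_[q])‖
      = ‖((Polynomial.aeval s P : ℚ_[q]) - ((P.eval n : ℤ) : ℚ_[q])) + ((P.eval n : ℤ) : ℚ_[q])‖ := by
        ring_nf
    _ ≤ max _ _ := Padic.nonarchimedean _ _
    _ ≤ (q:ℝ)⁻¹ := max_le h1 h2

private theorem norm_aeval_eq_one (q : ℕ) [hq : Fact q.Prime] (n : ℤ) (s : ℚ_[q])
    (hs : ‖s - (n:ℚ_[q])‖ < 1) (P : Polynomial ℤ) (hdvd : ¬ (q:ℤ) ∣ P.eval n) :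
    ‖(Polynomial.aeval s P : ℚ_[q])‖ = 1 := by
  have h2 : ‖((P.eval n : ℤ) : ℚ_[q])‖ = 1 := by
    rcases lt_or_eq_of_le (Padic.norm_int_le_one (p := q) (P.eval n)) with h | h
    · exact absurd (Padic.norm_intCast_lt_one_iff.1 h) hdvd
    · exact h
  have h1 : ‖(Polynomial.aeval s P : ℚ_[q]) - ((P.eval n : ℤ) : ℚ_[q])‖ < 1 :=
    lt_of_le_of_lt (key_diff q n s hs P) hs
  have hne : ‖(Polynomial.aeval s P : ℚ_[q]) - ((P.eval n : ℤ) : ℚ_[q])‖ ≠ ‖((P.eval n : ℤ) : ℚ_[q])‖ := by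
    rw [h2]; exact ne_of_lt h1
  calc ‖(Polynomial.aeval s P : ℚ_[q])‖
      = ‖((Polynomial.aeval s P : ℚ_[q]) - ((P.eval n : ℤ) : ℚ_[q])) + ((P.eval n : ℤ) : ℚ_[q])‖ := by
        ring_nf
    _ = max _ _ := Padic.add_eq_max_of_ne hne
    _ = 1 := by rw [h2]; exact max_eq_right (le_of_lt (h2 ▸ hne.lt_of_le (h2 ▸ h1.le)))

/-- Let `q` be a prime, `n ∈ ℤ`, `(p_i)` a sequence of primes, `(ω_i)` a sequence in
`(0,∞)`, and `s_i ∈ ℚ_{p_i}`. The images of the `s_i` under `ℚ_{p_i}^{ω_i}` converge in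
`𝔸¹_ℤ` to the image of the residue class of `n` in `ℤ/qℤ` (trivial valuation) iff
`ω_i → ∞` and eventually `p_i = q` with `s_i ∈ n + q·ℤ_q`. -/
theorem tendsto_to_resClass_iff (q : ℕ) [Fact q.Prime] (n : ℤ)
    (p : ℕ → ℕ) [∀ i, Fact (p i).Prime] (ω : ℕ → ℝ) (hω : ∀ i, 0 < ω i)
    (s : ∀ i, ℚ_[p i]) :
    (∀ P : Polynomial ℤ,
        Filter.Tendsto (fun i => ‖(Polynomial.aeval (s i) P : ℚ_[p i])‖ ^ ω i)
          Filter.atTop (nhds (if (q : ℤ) ∣ P.eval n then (0 : ℝ) else 1))) ↔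
      (Filter.Tendsto ω Filter.atTop Filter.atTop ∧
        ∃ i₀ : ℕ, ∀ i ≥ i₀, p i = q ∧ ‖s i - (n : ℚ_[p i])‖ < 1) := by
  have hq1 : (1:ℝ) < q := by exact_mod_cast (Fact.out : q.Prime).one_lt
  have hq0 : (0:ℝ) < (q:ℝ)⁻¹ := inv_pos.2 (lt_trans one_pos hq1)
  have hqlt1 : (q:ℝ)⁻¹ < 1 := inv_lt_one_of_one_lt₀ hq1
  constructor
  · intro H
    -- use P = C q
    have hCq := H (Polynomial.C (q:ℤ))
    rw [if_pos (by simp)] at hCq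
    have haevalCq : ∀ i, (Polynomial.aeval (s i) (Polynomial.C (q:ℤ)) : ℚ_[p i]) = ((q:ℤ) : ℚ_[p i]) := by
      intro i; simp
    -- eventually p i = q
    have hev : ∀ᶠ i in atTop, p i = q := by
      have hhalf := hCq.eventually (eventually_lt_nhds (show (0:ℝ) < 1 by norm_num))
      filter_upwards [hhalf] with i hi
      by_contra hne
      have : ‖((q:ℤ) : ℚ_[p i])‖ = 1 := by
        rcases lt_or_eq_of_le (Padic.norm_int_le_one (p := p i) (q:ℤ)) with h | h
        · exfalso
          have hd := (Padic.norm_intCast_lt_one_iff (p := p i) (k := (q:ℤ))).1 h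
          have := Int.natCast_dvd_natCast.mp (by exact_mod_cast hd)
          exact hne ((Nat.prime_dvd_prime_iff_eq (Fact.out) (Fact.out)).1 this)
        · exact h
      rw [haevalCq i, this, Real.one_rpow] at hi
      exact absurd hi (by norm_num)
    obtain ⟨i₀, hi₀⟩ := eventually_atTop.1 hev
    -- ω → ∞
    have hnormq : ∀ i ≥ i₀, ‖(Polynomial.aeval (s i) (Polynomial.C (q:ℤ)) : ℚ_[p i])‖ = (q:ℝ)⁻¹ := by
      intro i hi
      rw [haevalCq i]
      have h := hi₀ i hi
      calc ‖((q:ℤ) : ℚ_[p i])‖ = ‖((p i : ℤ) : ℚ_[p i])‖ := by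
            exact congrArg _ (by exact_mod_cast congrArg (fun m : ℕ => ((m:ℤ) : ℚ_[p i])) h.symm)
        _ = (p i : ℝ)⁻¹ := by exact_mod_cast Padic.norm_p (p := p i)
        _ = (q:ℝ)⁻¹ := by rw [h]
    have hωtop : Tendsto ω atTop atTop := by
      rw [tendsto_atTop]
      intro M
      have : ∀ᶠ i in atTop, ((q:ℝ)⁻¹) ^ ω i < ((q:ℝ)⁻¹) ^ M := by
        have hpos : (0:ℝ) < ((q:ℝ)⁻¹) ^ M := Real.rpow_pos_of_pos hq0 M
        have h1 := hCq.eventually (eventually_lt_nhds hpos)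
        filter_upwards [h1, eventually_ge_atTop i₀] with i hi hi'
        rwa [hnormq i hi'] at hi
      filter_upwards [this] with i hi
      exact le_of_lt ((Real.rpow_lt_rpow_left_iff_of_base_lt_one hq0 hqlt1).1 hi)
    refine ⟨hωtop, ?_⟩
    -- use P = X - C n
    have hX := H (Polynomial.X - Polynomial.C n)
    rw [if_pos (by simp)] at hX
    have haevalX : ∀ i, (Polynomial.aeval (s i) (Polynomial.X - Polynomial.C n) : ℚ_[p i]) = s i - (n : ℚ_[p i]) := by
      intro i; simp
    have hev2 : ∀ᶠ i in atTop, ‖s i - (n : ℚ_[p i])‖ < 1 := by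
      have h1 := hX.eventually (eventually_lt_nhds (show (0:ℝ) < 1 by norm_num))
      filter_upwards [h1] with i hi
      rw [haevalX i] at hi
      by_contra hge
      push_neg at hge
      have h1 : (1:ℝ) ≤ ‖s i - (n : ℚ_[p i])‖ ^ ω i := Real.one_le_rpow hge (hω i).le
      exact absurd (lt_of_le_of_lt h1 hi) (by norm_num)
    obtain ⟨i₁, hi₁⟩ := eventually_atTop.1 hev2
    exact ⟨max i₀ i₁, fun i hi =>
      ⟨hi₀ i (le_trans (le_max_left _ _) hi), hi₁ i (le_trans (le_max_right _ _) hi)⟩⟩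
  · rintro ⟨hωtop, i₀, h⟩ P
    by_cases hdvd : (q:ℤ) ∣ P.eval n
    · rw [if_pos hdvd]
      have hb : Tendsto (fun i => ((q:ℝ)⁻¹) ^ ω i) atTop (nhds 0) :=
        (tendsto_rpow_atTop_of_base_lt_one _ (by linarith) hqlt1).comp hωtop
      apply squeeze_zero' (g := fun i => ((q:ℝ)⁻¹) ^ ω i)
      · exact Eventually.of_forall fun i => Real.rpow_nonneg (norm_nonneg _) _
      · filter_upwards [eventually_ge_atTop i₀] with i hi
        obtain ⟨hpq, hs⟩ := h i hi
        have hle : ‖(Polynomial.aeval (s i) P : ℚ_[p i])‖ ≤ (q:ℝ)⁻¹ := by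
          have hdvd' : ((p i : ℕ) : ℤ) ∣ P.eval n := by rw [hpq]; exact hdvd
          have h1 := norm_aeval_le (p i) n (s i) hs P hdvd'
          have h2 : ((p i : ℝ))⁻¹ = (q:ℝ)⁻¹ := by rw [hpq]
          rwa [h2] at h1
        exact Real.rpow_le_rpow (norm_nonneg _) hle (hω i).le
      · exact hb
    · rw [if_neg hdvd]
      have : ∀ᶠ i in atTop, ‖(Polynomial.aeval (s i) P : ℚ_[p i])‖ ^ ω i = 1 := by
        filter_upwards [eventually_ge_atTop i₀] with i hi
        obtain ⟨hpq, hs⟩ := h i hi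
        have hdvd' : ¬ ((p i : ℕ) : ℤ) ∣ P.eval n := by rw [hpq]; exact hdvd
        rw [norm_aeval_eq_one (p i) n (s i) hs P hdvd', Real.one_rpow]
      exact Tendsto.congr' (this.mono fun i hi => hi.symm) tendsto_const_nhds
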